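/- (Ordering of the three information matrices for a PQC.) Let D_i = ∂_i ρ(φ), and define, with c^{FB}(a,b) = 2/(a+b), c^{WY}(a,b) = 4/(√a+√b)², and c^{KM}(a,b) = (ln a − ln b)/(a − b) for a ≠ b (and 1/a for a = b), the matrices I^{X}_{ij}(φ) = Σ_{k,ℓ<d} c^{X}(λ_k, λ_ℓ) ⟨k| D_i |ℓ⟩ ⟨ℓ| D_j |k⟩ for X ∈ {FB, WY, KM}. Then for every v ∈ ℝ^J, the quadratic forms q^{X}(v) = Σ_{i,j} v_i v_j I^{X}_{ij}(φ) are real numbers and satisfy q^{KM}(v) ≥ q^{WY}(v) ≥ q^{FB}(v) ≥ (1/2) · q^{WY}(v). -/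

import Mathlib

open Matrix

noncomputable section

attribute [local instance] Matrix.linftyOpNormedAddCommGroup Matrix.linftyOpNormedSpace

/-- Square complex matrices of size `d`. -/
abbrev Mat (d : ℕ) := Matrix (Fin d) (Fin d) ℂ

/-- Descending product `f (a + n - 1) * ⋯ * f (a + 1) * f a` (empty product is `1`). -/
def descProd {d : ℕ} (f : ℕ → Mat d) (a : ℕ) : ℕ → Mat d
  | 0 => 1
  | n + 1 => f (a + n) * descProd f a n

/-- The `j`-th layer `U_j(φ_j) = exp (−i φ_j H_j) V_j`. -/
def layer {d : ℕ} (H V : ℕ → Mat d) (φ : ℕ → ℝ) (j : ℕ) : Mat d :=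
  NormedSpace.exp ((-(Complex.I * (φ j : ℂ))) • H j) * V j

/-- `U_{R_j} = U_j ⋯ U_1`. -/
def UR {d : ℕ} (H V : ℕ → Mat d) (φ : ℕ → ℝ) (j : ℕ) : Mat d :=
  descProd (layer H V φ) 1 j

/-- `U_{L_j} = U_J ⋯ U_j`. -/
def UL {d : ℕ} (H V : ℕ → Mat d) (φ : ℕ → ℝ) (J j : ℕ) : Mat d :=
  descProd (layer H V φ) j (J + 1 - j)

/-- The full layered circuit `U(φ) = U_J ⋯ U_1`. -/
def Ufull {d : ℕ} (H V : ℕ → Mat d) (φ : ℕ → ℝ) (J : ℕ) : Mat d :=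
  UR H V φ J

/-- `B_j = U_{L_{j+1}} H_j U_{L_{j+1}}†`. -/
def Bmat {d : ℕ} (H V : ℕ → Mat d) (φ : ℕ → ℝ) (J j : ℕ) : Mat d :=
  UL H V φ J (j + 1) * H j * (UL H V φ J (j + 1))ᴴ

/-- `A_j = U_{R_j}† H_j U_{R_j}`. -/
def Amat {d : ℕ} (H V : ℕ → Mat d) (φ : ℕ → ℝ) (j : ℕ) : Mat d :=
  (UR H V φ j)ᴴ * H j * UR H V φ j

/-- The thermal state `ρ = e^{−G}/Z`. -/
def thermal {d : ℕ} (G : Mat d) (Z : ℝ) : Mat d :=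
  (Z : ℂ)⁻¹ • NormedSpace.exp (-G)

/-- The parameterized state `ρ(φ) = U(φ) ρ U(φ)†`. -/
def rhoFun {d : ℕ} (H V : ℕ → Mat d) (J : ℕ) (G : Mat d) (Z : ℝ) (φ : ℕ → ℝ) : Mat d :=
  Ufull H V φ J * thermal G Z * (Ufull H V φ J)ᴴ

/-- The sesquilinear form `⟨u| M |v⟩`, conjugate-linear in `u`. -/
def braket {d : ℕ} (u : Fin d → ℂ) (M : Mat d) (v : Fin d → ℂ) : ℂ :=
  star u ⬝ᵥ M.mulVec v

/-- Fisher–Bures coefficient `c^{FB}(a,b) = 2/(a+b)`. -/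
def fbCoeff (a b : ℝ) : ℝ := 2 / (a + b)

/-- Wigner–Yanase coefficient `c^{WY}(a,b) = 4/(√a+√b)²`. -/
def wyCoeff (a b : ℝ) : ℝ := 4 / (Real.sqrt a + Real.sqrt b) ^ 2

/-- Kubo–Mori coefficient `c^{KM}(a,b) = (ln a − ln b)/(a−b)` for `a ≠ b`, `1/a` for `a = b`. -/
def kmCoeff (a b : ℝ) : ℝ :=
  if a = b then 1 / a else (Real.log a - Real.log b) / (a - b)

/-- The partial derivative `D_i = ∂_i ρ(φ) = i [ρ(φ), B_i]`. -/
def Dmat {d : ℕ} (H V : ℕ → Mat d) (J : ℕ) (G : Mat d) (Z : ℝ) (φ : ℕ → ℝ) (i : ℕ) : Mat d :=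
  Complex.I • (rhoFun H V J G Z φ * Bmat H V φ J i - Bmat H V φ J i * rhoFun H V J G Z φ)

/-- The quadratic form `q(v) = Σ_{i,j} v_i v_j Σ_{k,ℓ} c(λ_k,λ_ℓ) ⟨k|D_i|ℓ⟩⟨ℓ|D_j|k⟩`. -/
def quadForm {d J : ℕ} (c : ℝ → ℝ → ℝ) (lam : Fin d → ℝ) (w : Fin d → Fin d → ℂ)
    (D : ℕ → Mat d) (vec : ℕ → ℝ) : ℂ :=
  ∑ i ∈ Finset.Icc 1 J, ∑ j ∈ Finset.Icc 1 J,
    ((vec i * vec j : ℝ) : ℂ) *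
      ∑ k : Fin d, ∑ l : Fin d,
        ((c (lam k) (lam l) : ℝ) : ℂ) * braket (w k) (D i) (w l) * braket (w l) (D j) (w k)


lemma log_ineq {t : ℝ} (ht : 1 ≤ t) : 2 * (t - 1) ≤ (t + 1) * Real.log t := by
  set f : ℝ → ℝ := fun t => (t + 1) * Real.log t - 2 * (t - 1) with hf
  have key : ∀ s ∈ Set.Ioi (0:ℝ), HasDerivAt f (Real.log s + (s + 1) * s⁻¹ - 2) s := by
    intro s hs
    have hs0 : s ≠ 0 := ne_of_gt hs
    have h1 := (((hasDerivAt_id s).add_const 1).mul (Real.hasDerivAt_log hs0)).sub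
      (((hasDerivAt_id s).sub_const 1).const_mul 2)
    refine h1.congr_deriv ?_
    simp only [id_eq]
    ring
  have hderiv_nonneg : ∀ s ∈ Set.Ioi (1:ℝ), 0 ≤ deriv f s := by
    intro s hs
    have hs1 : (1:ℝ) < s := hs
    have hs0 : (0:ℝ) < s := lt_trans one_pos hs1
    rw [(key s hs0).deriv]
    have hlog : 1 - s⁻¹ ≤ Real.log s := by
      have := Real.log_le_sub_one_of_pos (x := s⁻¹) (by positivity)
      rw [Real.log_inv] at this
      linarith
    have : (s + 1) * s⁻¹ = 1 + s⁻¹ := by field_simp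
    rw [this]
    linarith
  have hmono : MonotoneOn f (Set.Ici (1:ℝ)) := by
    apply monotoneOn_of_deriv_nonneg (convex_Ici 1)
    · apply ContinuousOn.sub
      · exact (continuousOn_id.add continuousOn_const).mul
          (Real.continuousOn_log.mono (by intro x hx; simp at hx ⊢; linarith))
      · fun_prop
    · intro s hs
      rw [interior_Ici] at hs
      exact ((key s (Set.mem_Ioi.mpr (lt_trans one_pos (Set.mem_Ioi.mp hs)))).differentiableAt).differentiableWithinAt
    · intro s hs
      rw [interior_Ici] at hs
      exact hderiv_nonneg s hs
  have := hmono (Set.self_mem_Ici) (Set.mem_Ici.mpr ht) ht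
  simp [hf] at this
  linarith

lemma log_mean {x y : ℝ} (hy : 0 < y) (hxy : y ≤ x) :
    2 * (x - y) ≤ (x + y) * (Real.log x - Real.log y) := by
  have hx : 0 < x := lt_of_lt_of_le hy hxy
  have ht : 1 ≤ x / y := (one_le_div hy).mpr hxy
  have h := log_ineq ht
  rw [Real.log_div hx.ne' hy.ne'] at h
  have h2 := mul_le_mul_of_nonneg_right h hy.le
  have e1 : 2 * (x / y - 1) * y = 2 * (x - y) := by field_simp
  have e2 : (x / y + 1) * (Real.log x - Real.log y) * y
      = (x + y) * (Real.log x - Real.log y) := by field_simp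
  rw [e1, e2] at h2
  exact h2


lemma kmCoeff_symm (a b : ℝ) : kmCoeff a b = kmCoeff b a := by
  unfold kmCoeff
  rcases eq_or_ne a b with h | h
  · simp [h]
  · rw [if_neg h, if_neg (Ne.symm h), ← neg_div_neg_eq]
    ring_nf

lemma wyCoeff_symm (a b : ℝ) : wyCoeff a b = wyCoeff b a := by
  unfold wyCoeff; rw [add_comm]

lemma wy_le_km_aux {a b : ℝ} (hb : 0 < b) (hba : b ≤ a) : wyCoeff a b ≤ kmCoeff a b := by
  have ha : 0 < a := lt_of_lt_of_le hb hba
  set x := Real.sqrt a with hx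
  set y := Real.sqrt b with hy
  have hx2 : x ^ 2 = a := Real.sq_sqrt ha.le
  have hy2 : y ^ 2 = b := Real.sq_sqrt hb.le
  have hxpos : 0 < x := Real.sqrt_pos.mpr ha
  have hypos : 0 < y := Real.sqrt_pos.mpr hb
  rcases eq_or_lt_of_le hba with h | h
  · subst h
    unfold wyCoeff kmCoeff
    rw [if_pos rfl, ← hx]
    rw [show (x + x)^2 = 4 * b by nlinarith]
    rw [show (4:ℝ) / (4 * b) = 1 / b by field_simp]
  · unfold wyCoeff kmCoeff
    rw [if_neg (ne_of_gt h)]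
    rw [div_le_div_iff₀ (by positivity) (by linarith)]
    have hlm := log_mean (x := x) (y := y)
      hypos (Real.sqrt_le_sqrt hba)
    have hlx : Real.log x = Real.log a / 2 := by rw [hx]; exact Real.log_sqrt ha.le
    have hly : Real.log y = Real.log b / 2 := by rw [hy]; exact Real.log_sqrt hb.le
    rw [hlx, hly] at hlm
    simp only [← hx, ← hy]
    nlinarith [mul_le_mul_of_nonneg_right hlm (by positivity : (0:ℝ) ≤ x + y), sq_nonneg (x - y)]

lemma wy_le_km {a b : ℝ} (ha : 0 < a) (hb : 0 < b) : wyCoeff a b ≤ kmCoeff a b := by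
  rcases le_total b a with h | h
  · exact wy_le_km_aux hb h
  · rw [kmCoeff_symm, wyCoeff_symm]; exact wy_le_km_aux ha h

lemma fb_le_wy {a b : ℝ} (ha : 0 < a) (hb : 0 < b) : fbCoeff a b ≤ wyCoeff a b := by
  have hx2 : Real.sqrt a ^ 2 = a := Real.sq_sqrt ha.le
  have hy2 : Real.sqrt b ^ 2 = b := Real.sq_sqrt hb.le
  have hxpos : 0 < Real.sqrt a := Real.sqrt_pos.mpr ha
  have hypos : 0 < Real.sqrt b := Real.sqrt_pos.mpr hb
  unfold fbCoeff wyCoeff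
  rw [div_le_div_iff₀ (by linarith) (by positivity)]
  nlinarith [sq_nonneg (Real.sqrt a - Real.sqrt b)]

lemma wy_half_le_fb {a b : ℝ} (ha : 0 < a) (hb : 0 < b) : wyCoeff a b / 2 ≤ fbCoeff a b := by
  have hx2 : Real.sqrt a ^ 2 = a := Real.sq_sqrt ha.le
  have hy2 : Real.sqrt b ^ 2 = b := Real.sq_sqrt hb.le
  have hxpos : 0 < Real.sqrt a := Real.sqrt_pos.mpr ha
  have hypos : 0 < Real.sqrt b := Real.sqrt_pos.mpr hb
  unfold fbCoeff wyCoeff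
  rw [div_div, div_le_div_iff₀ (by positivity) (by linarith)]
  nlinarith [mul_pos hxpos hypos]

lemma braket_star {d : ℕ} (u v : Fin d → ℂ) (M : Mat d) (hM : Mᴴ = M) :
    star (braket u M v) = braket v M u := by
  unfold braket
  rw [← Matrix.star_dotProduct, Matrix.star_mulVec, hM]
  rw [Matrix.dotProduct_mulVec]

lemma sum4_comm {α β γ : Type*} [AddCommMonoid γ] (s : Finset α) (t : Finset β)
    (f : α → α → β → β → γ) :
    ∑ i ∈ s, ∑ j ∈ s, ∑ k ∈ t, ∑ l ∈ t, f i j k l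
      = ∑ k ∈ t, ∑ l ∈ t, ∑ i ∈ s, ∑ j ∈ s, f i j k l := by
  calc ∑ i ∈ s, ∑ j ∈ s, ∑ k ∈ t, ∑ l ∈ t, f i j k l
      = ∑ i ∈ s, ∑ k ∈ t, ∑ j ∈ s, ∑ l ∈ t, f i j k l :=
        Finset.sum_congr rfl fun _ _ => Finset.sum_comm
    _ = ∑ k ∈ t, ∑ i ∈ s, ∑ j ∈ s, ∑ l ∈ t, f i j k l := Finset.sum_comm
    _ = ∑ k ∈ t, ∑ i ∈ s, ∑ l ∈ t, ∑ j ∈ s, f i j k l :=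
        Finset.sum_congr rfl fun _ _ => Finset.sum_congr rfl fun _ _ => Finset.sum_comm
    _ = ∑ k ∈ t, ∑ l ∈ t, ∑ i ∈ s, ∑ j ∈ s, f i j k l :=
        Finset.sum_congr rfl fun _ _ => Finset.sum_comm

lemma quadForm_real {d J : ℕ} (c : ℝ → ℝ → ℝ) (lam : Fin d → ℝ) (w : Fin d → Fin d → ℂ)
    (D : ℕ → Mat d) (vec : ℕ → ℝ) (hD : ∀ i, (D i)ᴴ = D i) :
    quadForm (J := J) c lam w D vec =
      ((∑ k : Fin d, ∑ l : Fin d, c (lam k) (lam l) *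
        Complex.normSq (∑ i ∈ Finset.Icc 1 J, (vec i : ℂ) * braket (w k) (D i) (w l)) : ℝ) : ℂ) := by
  set N : Fin d → Fin d → ℂ :=
    fun k l => ∑ i ∈ Finset.Icc 1 J, (vec i : ℂ) * braket (w k) (D i) (w l) with hN
  have hstar : ∀ k l, (starRingEnd ℂ) (N k l)
      = ∑ j ∈ Finset.Icc 1 J, (vec j : ℂ) * braket (w l) (D j) (w k) := by
    intro k l
    rw [hN, map_sum]
    refine Finset.sum_congr rfl fun j _ => ?_
    rw [_root_.map_mul, Complex.conj_ofReal]
    congr 1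
    exact braket_star (w k) (w l) (D j) (hD j)
  calc quadForm (J := J) c lam w D vec
      = ∑ i ∈ Finset.Icc 1 J, ∑ j ∈ Finset.Icc 1 J, ∑ k : Fin d, ∑ l : Fin d,
          ((c (lam k) (lam l) : ℝ) : ℂ) * (((vec i : ℝ) : ℂ) * braket (w k) (D i) (w l))
            * (((vec j : ℝ) : ℂ) * braket (w l) (D j) (w k)) := by
        unfold quadForm
        refine Finset.sum_congr rfl fun i _ => Finset.sum_congr rfl fun j _ => ?_
        rw [Finset.mul_sum]
        refine Finset.sum_congr rfl fun k _ => ?_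
        rw [Finset.mul_sum]
        refine Finset.sum_congr rfl fun l _ => ?_
        push_cast
        ring
    _ = ∑ k : Fin d, ∑ l : Fin d, ∑ i ∈ Finset.Icc 1 J, ∑ j ∈ Finset.Icc 1 J,
          ((c (lam k) (lam l) : ℝ) : ℂ) * (((vec i : ℝ) : ℂ) * braket (w k) (D i) (w l))
            * (((vec j : ℝ) : ℂ) * braket (w l) (D j) (w k)) := sum4_comm _ _ _
    _ = ∑ k : Fin d, ∑ l : Fin d,
          ((c (lam k) (lam l) : ℝ) : ℂ) * (N k l * (starRingEnd ℂ) (N k l)) := by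
        refine Finset.sum_congr rfl fun k _ => Finset.sum_congr rfl fun l _ => ?_
        rw [hstar, hN]
        rw [Finset.sum_mul_sum, Finset.mul_sum]
        refine Finset.sum_congr rfl fun i _ => ?_
        rw [Finset.mul_sum]
        refine Finset.sum_congr rfl fun j _ => ?_
        ring
    _ = _ := by
        push_cast
        simp only [Complex.mul_conj]
        rfl

lemma thermal_herm {d : ℕ} (G : Mat d) (Z : ℝ) (hG : G.IsHermitian) :
    (thermal G Z)ᴴ = thermal G Z := by
  unfold thermal
  rw [Matrix.conjTranspose_smul, ← Matrix.exp_conjTranspose, Matrix.conjTranspose_neg, hG.eq]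
  congr 1
  simp [Complex.ext_iff]

lemma rho_herm {d J : ℕ} (H V : ℕ → Mat d) (G : Mat d) (Z : ℝ) (φ : ℕ → ℝ)
    (hG : G.IsHermitian) : (rhoFun H V J G Z φ)ᴴ = rhoFun H V J G Z φ := by
  unfold rhoFun
  rw [Matrix.conjTranspose_mul, Matrix.conjTranspose_mul, Matrix.conjTranspose_conjTranspose,
    thermal_herm G Z hG, Matrix.mul_assoc]

lemma Bmat_herm {d : ℕ} (H V : ℕ → Mat d) (φ : ℕ → ℝ) (J j : ℕ) (hH : (H j).IsHermitian) :
    (Bmat H V φ J j)ᴴ = Bmat H V φ J j := by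
  unfold Bmat
  rw [Matrix.conjTranspose_mul, Matrix.conjTranspose_mul, Matrix.conjTranspose_conjTranspose,
    hH.eq, Matrix.mul_assoc]

lemma Dmat_herm {d J : ℕ} (H V : ℕ → Mat d) (G : Mat d) (Z : ℝ) (φ : ℕ → ℝ) (i : ℕ)
    (hH : (H i).IsHermitian) (hG : G.IsHermitian) :
    (Dmat H V J G Z φ i)ᴴ = Dmat H V J G Z φ i := by
  unfold Dmat
  rw [Matrix.conjTranspose_smul, Matrix.conjTranspose_sub, Matrix.conjTranspose_mul,
    Matrix.conjTranspose_mul, rho_herm H V G Z φ hG, Bmat_herm H V φ J i hH]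
  rw [show (star Complex.I) = -Complex.I from by simp, neg_smul, ← smul_neg, neg_sub]

/-- Ordering of the Fisher–Bures, Wigner–Yanase, and Kubo–Mori information matrices of a PQC:
the quadratic forms are real and satisfy `q^{KM} ≥ q^{WY} ≥ q^{FB} ≥ q^{WY}/2`. -/
theorem info_matrix_ordering_pqc {d J : ℕ} (hd : 1 ≤ d)
    (H V G : _) (hH : ∀ j, (H j : Mat d).IsHermitian)
    (hV : ∀ j, V j ∈ Matrix.unitaryGroup (Fin d) ℂ)
    (hG : (G : Mat d).IsHermitian)
    (Z : ℝ) (hZpos : 0 < Z) (hZ : (NormedSpace.exp (-G)).trace = (Z : ℂ))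
    (v : Fin d → Fin d → ℂ)
    (hortho : ∀ k l, star (v k) ⬝ᵥ v l = if k = l then 1 else 0)
    (lam : Fin d → ℝ) (hlampos : ∀ k, 0 < lam k)
    (hrhov : ∀ k, (thermal G Z).mulVec (v k) = (lam k : ℂ) • v k)
    (φ : ℕ → ℝ) (vec : ℕ → ℝ) :
    ((quadForm (J := J) kmCoeff lam (fun k => (Ufull H V φ J).mulVec (v k))
          (Dmat H V J G Z φ) vec).im = 0 ∧
        (quadForm (J := J) wyCoeff lam (fun k => (Ufull H V φ J).mulVec (v k))
          (Dmat H V J G Z φ) vec).im = 0 ∧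
        (quadForm (J := J) fbCoeff lam (fun k => (Ufull H V φ J).mulVec (v k))
          (Dmat H V J G Z φ) vec).im = 0) ∧
      (quadForm (J := J) wyCoeff lam (fun k => (Ufull H V φ J).mulVec (v k))
            (Dmat H V J G Z φ) vec).re ≤
          (quadForm (J := J) kmCoeff lam (fun k => (Ufull H V φ J).mulVec (v k))
            (Dmat H V J G Z φ) vec).re ∧
        (quadForm (J := J) fbCoeff lam (fun k => (Ufull H V φ J).mulVec (v k))
            (Dmat H V J G Z φ) vec).re ≤
          (quadForm (J := J) wyCoeff lam (fun k => (Ufull H V φ J).mulVec (v k))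
            (Dmat H V J G Z φ) vec).re ∧
        (quadForm (J := J) wyCoeff lam (fun k => (Ufull H V φ J).mulVec (v k))
              (Dmat H V J G Z φ) vec).re / 2 ≤
          (quadForm (J := J) fbCoeff lam (fun k => (Ufull H V φ J).mulVec (v k))
            (Dmat H V J G Z φ) vec).re := by
  have hDh : ∀ i, (Dmat H V J G Z φ i)ᴴ = Dmat H V J G Z φ i :=
    fun i => Dmat_herm H V G Z φ i (hH i) hG
  set w : Fin d → Fin d → ℂ := fun k => (Ufull H V φ J).mulVec (v k) with hw
  set n : Fin d → Fin d → ℝ := fun k l => Complex.normSq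
    (∑ i ∈ Finset.Icc 1 J, (vec i : ℂ) * braket (w k) (Dmat H V J G Z φ i) (w l)) with hn
  have hkm := quadForm_real (J := J) kmCoeff lam w (Dmat H V J G Z φ) vec hDh
  have hwy := quadForm_real (J := J) wyCoeff lam w (Dmat H V J G Z φ) vec hDh
  have hfb := quadForm_real (J := J) fbCoeff lam w (Dmat H V J G Z φ) vec hDh
  rw [hkm, hwy, hfb]
  refine ⟨⟨Complex.ofReal_im _, Complex.ofReal_im _, Complex.ofReal_im _⟩, ?_, ?_, ?_⟩
  · simp only [Complex.ofReal_re]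
    refine Finset.sum_le_sum fun k _ => Finset.sum_le_sum fun l _ => ?_
    exact mul_le_mul_of_nonneg_right (wy_le_km (hlampos k) (hlampos l)) (Complex.normSq_nonneg _)
  · simp only [Complex.ofReal_re]
    refine Finset.sum_le_sum fun k _ => Finset.sum_le_sum fun l _ => ?_
    exact mul_le_mul_of_nonneg_right (fb_le_wy (hlampos k) (hlampos l)) (Complex.normSq_nonneg _)
  · simp only [Complex.ofReal_re]
    rw [Finset.sum_div]
    refine Finset.sum_le_sum fun k _ => ?_
    rw [Finset.sum_div]
    refine Finset.sum_le_sum fun l _ => ?_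
    have h := mul_le_mul_of_nonneg_right (wy_half_le_fb (hlampos k) (hlampos l))
      (Complex.normSq_nonneg
        (∑ i ∈ Finset.Icc 1 J, (vec i : ℂ) * braket (w k) (Dmat H V J G Z φ i) (w l)))
    rw [div_mul_eq_mul_div] at h
    exact h
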